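/- The B-orbits of 2-nilpotent n×n complex matrices under conjugation by the Borel subgroup B of upper triangular invertible matrices are in bijection with oriented link patterns of size n, i.e., with oriented graphs on vertices {1,…,n} in which every vertex is incident to at most one arrow. In particular, the number of B-orbits in the variety of 2-nilpotent n×n matrices is finite. -/

import Mathlib

open Matrix

/-- The variety of 2-nilpotent `n × n` complex matrices. -/
def TwoNilpotent (n : ℕ) : Type := {N : Matrix (Fin n) (Fin n) ℂ // N ^ 2 = 0}

/-- The relation of being conjugate under the Borel subgroup `B` of invertible
upper triangular matrices. -/
def BorelConj (n : ℕ) (N N' : TwoNilpotent n) : Prop :=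
  ∃ b : Matrix (Fin n) (Fin n) ℂ, IsUnit b ∧ (∀ i j : Fin n, j < i → b i j = 0) ∧
    b * N.1 * b⁻¹ = N'.1

/-- Oriented link patterns of size `n`: loopless directed graphs on `{1,…,n}`
in which every vertex is incident to at most one arrow. -/
def OrientedLinkPattern (n : ℕ) : Type :=
  {A : Finset (Fin n × Fin n) //
    (∀ a ∈ A, a.1 ≠ a.2) ∧
    ∀ v : Fin n, (A.filter (fun a => a.1 = v ∨ a.2 = v)).card ≤ 1}

open Matrix Submodule Module



/-- Submodule of vectors supported on a finset. -/
noncomputable def suppSub (n : ℕ) (S : Finset (Fin n)) : Submodule ℂ (Fin n → ℂ) where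
  carrier := {x | ∀ i, i ∉ S → x i = 0}
  add_mem' hx hy i hi := by simp [hx i hi, hy i hi]
  zero_mem' := by intro i _; rfl
  smul_mem' c x hx i hi := by simp [hx i hi]

lemma mem_suppSub {n : ℕ} {S : Finset (Fin n)} {x : Fin n → ℂ} :
    x ∈ suppSub n S ↔ ∀ i ∉ S, x i = 0 := Iff.rfl

lemma suppSub_mono {n : ℕ} {S T : Finset (Fin n)} (h : S ⊆ T) :
    suppSub n S ≤ suppSub n T := fun x hx i hi => hx i (fun hs => hi (h hs))

lemma suppSub_sup {n : ℕ} (S T : Finset (Fin n)) :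
    suppSub n S ⊔ suppSub n T = suppSub n (S ∪ T) := by
  apply le_antisymm
  · exact sup_le (suppSub_mono Finset.subset_union_left)
      (suppSub_mono Finset.subset_union_right)
  · intro x hx
    rw [Submodule.mem_sup]
    classical
    refine ⟨fun i => if i ∈ S then x i else 0, ?_, fun i => if i ∈ S then 0 else x i, ?_, ?_⟩
    · intro i hi; simp [hi]
    · intro i hi
      by_cases h : i ∈ S
      · simp [h]
      · simp [h, hx i (by simp [h, hi])]
    · funext i; by_cases h : i ∈ S <;> simp [h]

noncomputable def suppSubEquiv (n : ℕ) (S : Finset (Fin n)) :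
    suppSub n S ≃ₗ[ℂ] (S → ℂ) where
  toFun x := fun i => x.1 i
  map_add' x y := rfl
  map_smul' c x := rfl
  invFun y := ⟨fun i => if h : i ∈ S then y ⟨i, h⟩ else 0, by
    intro i hi; simp [hi]⟩
  left_inv x := by
    ext i
    by_cases h : i ∈ S
    · simp [h]
    · simp [h, x.2 i h]
  right_inv y := by ext i; simp

lemma finrank_suppSub {n : ℕ} (S : Finset (Fin n)) :
    finrank ℂ (suppSub n S) = S.card := by
  rw [(suppSubEquiv n S).finrank_eq, Module.finrank_pi, Fintype.card_coe]

section OLPmat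
variable {n : ℕ} (A : Finset (Fin n × Fin n))

/-- The matrix of an oriented link pattern. -/
def matOf : Matrix (Fin n) (Fin n) ℂ :=
  Matrix.of fun i j => if (i, j) ∈ A then 1 else 0

variable {A}

def OLPcond (A : Finset (Fin n × Fin n)) : Prop :=
  (∀ a ∈ A, a.1 ≠ a.2) ∧ ∀ v : Fin n, (A.filter (fun a => a.1 = v ∨ a.2 = v)).card ≤ 1

lemma OLPcond.col_unique (h : OLPcond A) {i i' j : Fin n}
    (h1 : (i, j) ∈ A) (h2 : (i', j) ∈ A) : i = i' := by
  have := Finset.card_le_one.mp (h.2 j) (i, j) (by simp [Finset.mem_filter, h1])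
    (i', j) (by simp [Finset.mem_filter, h2])
  exact congrArg Prod.fst this

lemma OLPcond.row_unique (h : OLPcond A) {i j j' : Fin n}
    (h1 : (i, j) ∈ A) (h2 : (i, j') ∈ A) : j = j' := by
  have := Finset.card_le_one.mp (h.2 i) (i, j) (by simp [Finset.mem_filter, h1])
    (i, j') (by simp [Finset.mem_filter, h2])
  exact congrArg Prod.snd this

lemma OLPcond.no_chain (h : OLPcond A) {i k j : Fin n}
    (h1 : (i, k) ∈ A) (h2 : (k, j) ∈ A) : False := by
  have heq := Finset.card_le_one.mp (h.2 k) (i, k) (by simp [Finset.mem_filter, h1])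
    (k, j) (by simp [Finset.mem_filter, h2])
  have h1' : i = k := congrArg Prod.fst heq
  have h2' : k = j := congrArg Prod.snd heq
  exact h.1 _ h1 (by simp [h1'])

lemma matOf_sq (h : OLPcond A) : matOf A * matOf A = 0 := by
  ext i j
  rw [Matrix.mul_apply]
  refine Finset.sum_eq_zero fun k _ => ?_
  simp only [matOf, Matrix.of_apply]
  by_cases h1 : (i, k) ∈ A
  · by_cases h2 : (k, j) ∈ A
    · exact absurd (h.no_chain h1 h2) (by simp)
    · simp [h2]
  · simp [h1]

lemma matOf_col (h : OLPcond A) {i j : Fin n} (hij : (i, j) ∈ A) :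
    matOf A *ᵥ Pi.single j 1 = Pi.single i 1 := by
  funext k
  rw [Matrix.mulVec_single]
  simp only [matOf, Matrix.of_apply, mul_one, MulOpposite.op_one, one_smul, Pi.smul_apply, Matrix.col_apply]
  by_cases hk : k = i
  · subst hk; simp [hij]
  · rw [if_neg (fun hc => hk (h.col_unique hc hij)), Pi.single_apply, if_neg hk]

lemma matOf_col_zero {j : Fin n} (hij : ∀ i, (i, j) ∉ A) :
    matOf A *ᵥ Pi.single j 1 = 0 := by
  funext k
  rw [Matrix.mulVec_single]
  simp [matOf, hij k]

lemma matOf_mulVec_eq_zero_of (h : OLPcond A) {x : Fin n → ℂ} {i : Fin n}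
    (hx : ∀ t, (i, t) ∈ A → x t = 0) : (matOf A *ᵥ x) i = 0 := by
  rw [Matrix.mulVec, dotProduct]
  refine Finset.sum_eq_zero fun t _ => ?_
  by_cases ht : (i, t) ∈ A
  · simp [hx t ht]
  · simp [matOf, ht]

end OLPmat

section Rho
variable {n : ℕ}

/-- Finset of indices with value `< k`. -/
def IioF (n : ℕ) (k : ℕ) : Finset (Fin n) := Finset.univ.filter (fun t => t.val < k)

lemma mem_IioF {k : ℕ} {t : Fin n} : t ∈ IioF n k ↔ t.val < k := by
  simp [IioF]

/-- The rank invariant. -/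
noncomputable def rho (N : Matrix (Fin n) (Fin n) ℂ) (i j : ℕ) : ℕ :=
  finrank ℂ (suppSub n (IioF n i) ⊔ (suppSub n (IioF n j)).map N.mulVecLin : Submodule ℂ (Fin n → ℂ))

lemma triangular_map_suppSub_le {c : Matrix (Fin n) (Fin n) ℂ}
    (hc : ∀ i j : Fin n, j < i → c i j = 0) (k : ℕ) :
    (suppSub n (IioF n k)).map c.mulVecLin ≤ suppSub n (IioF n k) := by
  rintro x ⟨y, hy, rfl⟩
  intro i hi
  rw [mem_IioF, not_lt] at hi
  show (c *ᵥ y) i = 0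
  rw [Matrix.mulVec, dotProduct]
  refine Finset.sum_eq_zero fun t _ => ?_
  by_cases ht : t.val < k
  · have : t < i := by
      rw [Fin.lt_def]; omega
    simp [hc i t this]
  · simp [hy t (by rw [mem_IioF]; exact ht)]

lemma triangular_map_suppSub_eq {c : Matrix (Fin n) (Fin n) ℂ}
    (hcu : IsUnit c) (hc : ∀ i j : Fin n, j < i → c i j = 0) (k : ℕ) :
    (suppSub n (IioF n k)).map c.mulVecLin = suppSub n (IioF n k) := by
  have hdet : IsUnit c.det := (Matrix.isUnit_iff_isUnit_det c).mp hcu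
  have : Invertible c := c.invertibleOfIsUnitDet hdet
  have hcinv : ∀ i j : Fin n, j < i → c⁻¹ i j = 0 := by
    have := Matrix.blockTriangular_inv_of_blockTriangular (M := c) (b := id)
      (fun i j h => hc i j h)
    exact fun i j h => this h
  refine le_antisymm (triangular_map_suppSub_le hc k) ?_
  intro x hx
  have : (c⁻¹ *ᵥ x) ∈ suppSub n (IioF n k) :=
    triangular_map_suppSub_le hcinv k ⟨x, hx, rfl⟩
  refine ⟨c⁻¹ *ᵥ x, this, ?_⟩
  show c *ᵥ (c⁻¹ *ᵥ x) = x
  rw [Matrix.mulVec_mulVec, Matrix.mul_nonsing_inv c hdet, Matrix.one_mulVec]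

/-- Invariance of `rho` under Borel conjugation. -/
lemma rho_conj {b N : Matrix (Fin n) (Fin n) ℂ}
    (hb : IsUnit b) (ht : ∀ i j : Fin n, j < i → b i j = 0) (i j : ℕ) :
    rho (b * N * b⁻¹) i j = rho N i j := by
  have hdet : IsUnit b.det := (Matrix.isUnit_iff_isUnit_det b).mp hb
  have hinv : Invertible b := b.invertibleOfIsUnitDet hdet
  have hbinvt : ∀ i j : Fin n, j < i → b⁻¹ i j = 0 := by
    have := Matrix.blockTriangular_inv_of_blockTriangular (M := b) (b := id)
      (fun i j h => ht i j h)
    exact fun i j h => this h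
  have hbinvu : IsUnit b⁻¹ := by
    rw [Matrix.isUnit_nonsing_inv_iff]; exact hb
  let e : (Fin n → ℂ) ≃ₗ[ℂ] (Fin n → ℂ) :=
    LinearEquiv.ofLinear b.mulVecLin b⁻¹.mulVecLin
      (by rw [← Matrix.mulVecLin_mul, Matrix.mul_nonsing_inv b hdet, Matrix.mulVecLin_one])
      (by rw [← Matrix.mulVecLin_mul, Matrix.nonsing_inv_mul b hdet, Matrix.mulVecLin_one])
  have hmaps : ((suppSub n (IioF n j)).map (b * N * b⁻¹).mulVecLin) =
      (((suppSub n (IioF n j)).map N.mulVecLin).map b.mulVecLin) := by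
    rw [Matrix.mulVecLin_mul, Matrix.mulVecLin_mul, Submodule.map_comp, Submodule.map_comp,
      triangular_map_suppSub_eq hbinvu hbinvt]
  unfold rho
  rw [hmaps]
  have h2 : suppSub n (IioF n i) ⊔
        ((suppSub n (IioF n j)).map N.mulVecLin).map b.mulVecLin
      = ((suppSub n (IioF n i) ⊔ (suppSub n (IioF n j)).map N.mulVecLin)).map b.mulVecLin := by
    rw [Submodule.map_sup]
    rw [triangular_map_suppSub_eq hb ht i]
  rw [h2]
  exact LinearEquiv.finrank_map_eq e _

end Rho

section RhoOLP
variable {n : ℕ} {A : Finset (Fin n × Fin n)}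

def TgtF (A : Finset (Fin n × Fin n)) (j : ℕ) : Finset (Fin n) :=
  (A.filter (fun a => a.2.val < j)).image Prod.fst

lemma map_matOf_suppSub (h : OLPcond A) (j : ℕ) :
    (suppSub n (IioF n j)).map (matOf A).mulVecLin = suppSub n (TgtF A j) := by
  apply le_antisymm
  · rintro x ⟨y, hy, rfl⟩ i hi
    show (matOf A *ᵥ y) i = 0
    apply matOf_mulVec_eq_zero_of h
    intro t ht
    by_cases htj : t.val < j
    · exact absurd (Finset.mem_image.mpr ⟨(i,t), Finset.mem_filter.mpr ⟨ht, htj⟩, rfl⟩) hi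
    · exact hy t (by rw [mem_IioF]; exact htj)
  · intro x hx
    refine ⟨(∑ a ∈ A.filter (fun a => a.2.val < j), x a.1 • (Pi.single a.2 1 : Fin n → ℂ)), ?_, ?_⟩
    · intro t ht
      rw [Finset.sum_apply]
      refine Finset.sum_eq_zero fun a ha => ?_
      have hne : a.2 ≠ t := by
        intro hc
        rw [mem_IioF] at ht
        exact ht (hc ▸ (Finset.mem_filter.mp ha).2)
      simp [Pi.single_apply, Ne.symm hne]
    · show (matOf A).mulVecLin _ = x
      rw [_root_.map_sum]
      funext i
      rw [Finset.sum_apply]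
      have hterm : ∀ a ∈ A.filter (fun a => a.2.val < j),
          ((matOf A).mulVecLin (x a.1 • (Pi.single a.2 1 : Fin n → ℂ))) i
            = x a.1 * ((Pi.single a.1 1 : Fin n → ℂ) i) := by
        intro a ha
        rw [_root_.map_smul]
        have hmem : (a.1, a.2) ∈ A := by
          have := (Finset.mem_filter.mp ha).1; simpa using this
        have hcol := matOf_col h hmem
        show (x a.1 • ((matOf A).mulVecLin (Pi.single a.2 1 : Fin n → ℂ))) i = _
        have heq2 : (matOf A).mulVecLin (Pi.single a.2 (1:ℂ)) = (Pi.single a.1 1 : Fin n → ℂ) := hcol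
        rw [heq2]
        simp
      rw [Finset.sum_congr rfl hterm]
      by_cases hi : i ∈ TgtF A j
      · obtain ⟨a₀, ha₀, ha₀i⟩ := Finset.mem_image.mp hi
        rw [Finset.sum_eq_single a₀]
        · rw [ha₀i]; simp
        · intro a ha hne
          have h1 : (a.1, a.2) ∈ A := by
            have := (Finset.mem_filter.mp ha).1; simpa using this
          by_cases hai : a.1 = i
          · exfalso
            have h0 : (a₀.1, a₀.2) ∈ A := by
              have := (Finset.mem_filter.mp ha₀).1; simpa using this
            have h1' : (i, a.2) ∈ A := by rw [← hai]; exact h1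
            have h0' : (i, a₀.2) ∈ A := by rw [← ha₀i]; exact h0
            have h2 : a.2 = a₀.2 := h.row_unique h1' h0'
            exact hne (Prod.ext (hai.trans ha₀i.symm) h2)
          · simp [Pi.single_apply, hai]
        · intro hc; exact absurd ha₀ hc
      · rw [hx i hi]
        refine Finset.sum_eq_zero fun a ha => ?_
        have hai : a.1 ≠ i := fun hc => hi (Finset.mem_image.mpr ⟨a, ha, hc⟩)
        simp [Pi.single_apply, hai]

def cA (A : Finset (Fin n × Fin n)) (i j : ℕ) : ℕ :=
  (A.filter fun a => i ≤ a.1.val ∧ a.2.val < j).card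

lemma rho_matOf (h : OLPcond A) (i j : ℕ) :
    rho (matOf A) i j = (IioF n i).card + cA A i j := by
  unfold rho
  rw [map_matOf_suppSub h, suppSub_sup, finrank_suppSub]
  have hsplit : IioF n i ∪ TgtF A j = IioF n i ∪ (TgtF A j \ IioF n i) := by
    rw [Finset.union_sdiff_self_eq_union]
  rw [hsplit, Finset.card_union_of_disjoint Finset.disjoint_sdiff]
  congr 1
  have himg : TgtF A j \ IioF n i
      = (A.filter fun a => i ≤ a.1.val ∧ a.2.val < j).image Prod.fst := by
    ext t
    simp only [Finset.mem_sdiff, TgtF, Finset.mem_image, Finset.mem_filter, mem_IioF, not_lt]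
    constructor
    · rintro ⟨⟨a, ⟨haA, haj⟩, rfl⟩, hit⟩
      exact ⟨a, ⟨haA, hit, haj⟩, rfl⟩
    · rintro ⟨a, ⟨haA, hit, haj⟩, rfl⟩
      exact ⟨⟨a, ⟨haA, haj⟩, rfl⟩, hit⟩
  rw [himg, Finset.card_image_of_injOn, cA]
  intro a ha b hb hab
  simp only [Finset.coe_filter, Set.mem_setOf_eq] at ha hb
  have h1 : (a.1, a.2) ∈ A := by simpa using ha.1
  have h2 : (b.1, b.2) ∈ A := by simpa using hb.1
  have h1' : (a.1, b.2) ∈ A := by rw [hab]; exact h2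
  exact Prod.ext hab (h.row_unique h1 h1')

lemma cA_eq_imp_eq {A A' : Finset (Fin n × Fin n)}
    (h : ∀ i j, cA A i j = cA A' i j) : A = A' := by
  have key : ∀ (B : Finset (Fin n × Fin n)) (x y : Fin n),
      cA B x.val (y.val+1) + cA B (x.val+1) y.val
        = cA B (x.val+1) (y.val+1) + cA B x.val y.val
          + (B.filter (fun a => a = (x,y))).card := by
    intro B x y
    unfold cA
    rw [Finset.card_filter, Finset.card_filter, Finset.card_filter, Finset.card_filter,
      Finset.card_filter, ← Finset.sum_add_distrib, ← Finset.sum_add_distrib,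
      ← Finset.sum_add_distrib]
    refine Finset.sum_congr rfl fun a _ => ?_
    have hxy : (a = (x,y)) ↔ (a.1.val = x.val ∧ a.2.val = y.val) := by
      rw [Prod.ext_iff, Fin.ext_iff, Fin.ext_iff]
    by_cases h1 : a = (x,y)
    · rw [if_pos h1]
      obtain ⟨e1, e2⟩ := hxy.mp h1
      split_ifs <;> omega
    · rw [if_neg h1]
      rw [hxy, not_and_or] at h1
      rcases h1 with h1 | h1 <;> split_ifs <;> omega
  ext a
  obtain ⟨x, y⟩ := a
  have h1 := key A x y
  have h2 := key A' x y
  have hcard : (A.filter (fun a => a = (x,y))).card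
      = (A'.filter (fun a => a = (x,y))).card := by
    have e1 := h x.val (y.val+1)
    have e2 := h (x.val+1) y.val
    have e3 := h (x.val+1) (y.val+1)
    have e4 := h x.val y.val
    omega
  rw [Finset.filter_eq', Finset.filter_eq'] at hcard
  by_cases hA : (x,y) ∈ A <;> by_cases hA' : (x,y) ∈ A' <;> simp_all

end RhoOLP

section Key
variable {V : Type} [AddCommGroup V] [Module ℂ V]

lemma image_coe_aux {n : ℕ} (v : Fin n → V) (s : Finset (Fin n)) (t : Set (Fin n))
    (hts : ∀ x ∈ t, x ∈ s) :
    (fun j : {x // x ∈ s} => v j) '' {j : {x // x ∈ s} | ↑j ∈ t} = v '' t := by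
  ext x
  constructor
  · rintro ⟨⟨j, hj⟩, hjt, rfl⟩; exact ⟨j, hjt, rfl⟩
  · rintro ⟨j, hjt, rfl⟩; exact ⟨⟨j, hts j hjt⟩, hjt, rfl⟩

lemma range_coe_aux {n : ℕ} (v : Fin n → V) (t : Finset (Fin n)) :
    Set.range (fun j : {x // x ∈ t} => v j) = v '' ↑t := by
  ext x
  constructor
  · rintro ⟨⟨j, hj⟩, rfl⟩; exact ⟨j, hj, rfl⟩
  · rintro ⟨j, hj, rfl⟩; exact ⟨⟨j, hj⟩, rfl⟩

lemma quot_basis {n : ℕ} (v : Fin n → V) (t : Finset (Fin n)) (p : Submodule ℂ V)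
    (hind : LinearIndependent ℂ (fun j : {x // x ∈ t} => v j))
    (hdisj : Disjoint (span ℂ (v '' ↑t)) p)
    (hsup : span ℂ (v '' ↑t) ⊔ p = ⊤) :
    LinearIndependent ℂ (fun j : {x // x ∈ t} => p.mkQ (v j)) ∧
      span ℂ ((fun k => p.mkQ (v k)) '' ↑t) = ⊤ := by
  constructor
  · have h2 : Disjoint (span ℂ (Set.range fun j : {x // x ∈ t} => v j))
        (LinearMap.ker p.mkQ) := by
      rw [Submodule.ker_mkQ, range_coe_aux]
      exact hdisj
    exact hind.map h2
  · have himg : ((fun k => p.mkQ (v k)) '' ↑t) = p.mkQ '' (v '' ↑t) := by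
      rw [← Set.image_comp]; rfl
    rw [himg, ← Submodule.map_span]
    have hmapp : p.map p.mkQ = ⊥ := by
      rw [Submodule.eq_bot_iff]
      rintro x ⟨y, hy, rfl⟩
      rw [Submodule.mkQ_apply, Submodule.Quotient.mk_eq_zero]
      exact hy
    rw [← sup_bot_eq (Submodule.map p.mkQ (span ℂ (v '' ↑t))), ← hmapp, ← Submodule.map_sup,
      hsup, Submodule.map_top, Submodule.range_mkQ]

end Key

section KeyLemma
open Submodule

lemma key_lemma (m : ℕ) {n : ℕ} :
    ∀ (V : Type) [AddCommGroup V] [Module ℂ V] (f : V →ₗ[ℂ] V),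
    (∀ x, f (f x) = 0) →
    ∀ (s : Finset (Fin n)), s.card ≤ m →
    ∀ (v : Fin n → V), LinearIndependent ℂ (fun j : {x // x ∈ s} => v j) →
    span ℂ (v '' ↑s) = ⊤ →
    ∃ (w : Fin n → V) (σ : Fin n → Option (Fin n)),
      (∀ j ∈ s, w j ∈ span ℂ (v '' {k : Fin n | k ∈ s ∧ k ≤ j}) ∧
        w j ∉ span ℂ (v '' {k : Fin n | k ∈ s ∧ k < j})) ∧
      (∀ j i, σ j = some i → j ∈ s ∧ i ∈ s ∧ f (w j) = w i) ∧
      (∀ j ∈ s, σ j = none → f (w j) = 0) ∧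
      (∀ j i, σ j = some i → σ i = none) ∧
      (∀ j j' i, σ j = some i → σ j' = some i → j = j') := by
  induction m with
  | zero =>
    intro V _ _ f hf s hcard v hind hspan
    have hs : s = ∅ := Finset.card_eq_zero.mp (Nat.le_zero.mp hcard)
    subst hs
    exact ⟨v, fun _ => none, by simp, by simp, by simp, by simp, by simp⟩
  | succ m IH =>
    intro V _ _ f hf s hcard v hind hspan
    classical
    by_cases hsne : s.Nonempty
    swap
    · rw [Finset.not_nonempty_iff_eq_empty] at hsne
      subst hsne
      exact ⟨v, fun _ => none, by simp, by simp, by simp, by simp, by simp⟩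
    -- setup
    set j₀ := s.min' hsne with hj₀def
    have hj₀s : j₀ ∈ s := s.min'_mem hsne
    have hv₀ : v j₀ ≠ 0 := hind.ne_zero ⟨j₀, hj₀s⟩
    set Vseg : Fin n → Submodule ℂ V := fun j => span ℂ (v '' {k : Fin n | k ∈ s ∧ k ≤ j})
      with hVsegdef
    set Vlt : Fin n → Submodule ℂ V := fun j => span ℂ (v '' {k : Fin n | k ∈ s ∧ k < j})
      with hVltdef
    have hv_mem_seg : ∀ {k j : Fin n}, k ∈ s → k ≤ j → v k ∈ Vseg j := by
      intro k j hk hkj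
      exact subset_span ⟨k, ⟨hk, hkj⟩, rfl⟩
    have hv_mem_lt : ∀ {k j : Fin n}, k ∈ s → k < j → v k ∈ Vlt j := by
      intro k j hk hkj
      exact subset_span ⟨k, ⟨hk, hkj⟩, rfl⟩
    have hVseg_mono : ∀ {j j' : Fin n}, j ≤ j' → Vseg j ≤ Vseg j' := by
      intro j j' h
      exact span_mono (Set.image_mono (fun k hk => ⟨hk.1, le_trans hk.2 h⟩))
    have hVlt_le_seg : ∀ {j : Fin n}, Vlt j ≤ Vseg j := by
      intro j
      exact span_mono (Set.image_mono (fun k hk => ⟨hk.1, le_of_lt hk.2⟩))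
    have hVseg_le_lt : ∀ {j j' : Fin n}, j < j' → Vseg j ≤ Vlt j' := by
      intro j j' h
      exact span_mono (Set.image_mono (fun k hk => ⟨hk.1, lt_of_le_of_lt hk.2 h⟩))
    have hVltj₀ : Vlt j₀ = ⊥ := by
      have : {k : Fin n | k ∈ s ∧ k < j₀} = ∅ := by
        ext k
        simp only [Set.mem_setOf_eq, Set.mem_empty_iff_false, iff_false, not_and, not_lt]
        intro hk
        exact s.min'_le k hk
      rw [hVltdef]
      simp [this]
    have hj₀lt : ∀ {j : Fin n}, j ∈ s → j ≠ j₀ → j₀ < j := by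
      intro j hj hne
      exact lt_of_le_of_ne (s.min'_le j hj) (Ne.symm hne)
    by_cases hfv₀ : f (v j₀) = 0
    · -- CASE A : f (v j₀) = 0
      set U : Submodule ℂ V := span ℂ {v j₀} with hUdef
      have hUle : U ≤ Submodule.comap f U := by
        rw [hUdef, span_le]
        rintro x hx
        rw [Set.mem_singleton_iff] at hx
        subst hx
        show f (v j₀) ∈ U
        rw [hfv₀]
        exact zero_mem U
      set π := U.mkQ with hπdef
      set f' : (V ⧸ U) →ₗ[ℂ] (V ⧸ U) := Submodule.mapQ U U f hUle with hf'def
      have hπf : ∀ x, f' (π x) = π (f x) := by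
        intro x
        rw [hπdef, hf'def]
        simp [Submodule.mapQ_apply]
      have hf' : ∀ y, f' (f' y) = 0 := by
        intro y
        obtain ⟨x, rfl⟩ := Submodule.mkQ_surjective U y
        show f' (f' (π x)) = 0
        rw [hπf, hπf, hf x, _root_.map_zero]
      set s' := s.erase j₀ with hs'def
      have hs'sub : ∀ {x}, x ∈ s' → x ∈ s := fun hx => Finset.mem_of_mem_erase hx
      have hs'ne : ∀ {x}, x ∈ s' → x ≠ j₀ := fun hx => Finset.ne_of_mem_erase hx
      have hs'card : s'.card ≤ m := by
        rw [hs'def, Finset.card_erase_of_mem hj₀s]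
        omega
      have hind' : LinearIndependent ℂ (fun j : {x // x ∈ s'} => v j) := by
        have hinj : Function.Injective
            (fun j : {x // x ∈ s'} => (⟨j, hs'sub j.2⟩ : {x // x ∈ s})) := by
          intro a b hab
          exact Subtype.ext (by simpa using hab)
        exact hind.comp _ hinj
      have hπv₀ : π (v j₀) = 0 := by
        rw [hπdef, Submodule.mkQ_apply, Submodule.Quotient.mk_eq_zero]
        exact subset_span rfl
      have hdisjA : Disjoint (span ℂ (v '' ↑s')) U := by
        have hd := hind.disjoint_span_image (R := ℂ)
          (s := {j : {x // x ∈ s} | ↑j ∈ (↑s' : Set (Fin n))})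
          (t := {j : {x // x ∈ s} | ↑j ∈ ({j₀} : Set (Fin n))}) ?_
        · rwa [image_coe_aux v s (↑s' : Set (Fin n)) (fun x hx => hs'sub hx),
            image_coe_aux v s ({j₀} : Set (Fin n)) (fun x hx => by
              rw [Set.mem_singleton_iff] at hx; exact hx ▸ hj₀s),
            Set.image_singleton] at hd
        · rw [Set.disjoint_left]
          rintro j hj1 hj2
          exact hs'ne hj1 hj2
      have hsupA : span ℂ (v '' ↑s') ⊔ U = ⊤ := by
        rw [hUdef, ← Set.image_singleton (f := v), ← Submodule.span_union, ← Set.image_union]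
        have hset : ((↑s' : Set (Fin n)) ∪ {j₀}) = ↑s := by
          rw [hs'def, Finset.coe_erase, Set.diff_union_self]
          exact Set.union_eq_self_of_subset_right (by simp [hj₀s])
        rw [hset, hspan]
      obtain ⟨hindQ, hspQ⟩ := quot_basis v s' U hind' hdisjA hsupA
      obtain ⟨w', σ', hmem', hsome', hnone', htgt', hinj'⟩ :=
        IH (V ⧸ U) f' hf' s' hs'card (fun k => π (v k)) hindQ hspQ
      have hmapVlt : ∀ j : Fin n, (Vlt j).map π ≤
          span ℂ ((fun k => π (v k)) '' {k : Fin n | k ∈ s' ∧ k < j}) := by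
        intro j
        rw [hVltdef, Submodule.map_span, span_le]
        rintro x ⟨y, ⟨k, ⟨hk1, hk2⟩, rfl⟩, rfl⟩
        by_cases hkj : k = j₀
        · subst hkj
          show π (v j₀) ∈ _
          rw [hπv₀]
          exact zero_mem _
        · exact subset_span ⟨k, ⟨Finset.mem_erase.mpr ⟨hkj, hk1⟩, hk2⟩, rfl⟩
      have hlift : ∀ j : Fin n, ∃ x : V, j ∈ s' → (x ∈ Vseg j ∧ π x = w' j) := by
        intro j
        by_cases hj : j ∈ s'
        · have h1 := (hmem' j hj).1
          have h2 : span ℂ ((fun k => π (v k)) '' {k : Fin n | k ∈ s' ∧ k ≤ j})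
              ≤ (Vseg j).map π := by
            rw [span_le]
            rintro x ⟨k, ⟨hk1, hk2⟩, rfl⟩
            exact ⟨v k, hv_mem_seg (hs'sub hk1) hk2, rfl⟩
          obtain ⟨x, hx1, hx2⟩ := h2 h1
          exact ⟨x, fun _ => ⟨hx1, hx2⟩⟩
        · exact ⟨0, fun hc => absurd hc hj⟩
      choose u hu using hlift
      have hu1 : ∀ {j}, j ∈ s' → u j ∈ Vseg j := fun hj => ((hu _) hj).1
      have hu2 : ∀ {j}, j ∈ s' → π (u j) = w' j := fun hj => ((hu _) hj).2
      have hu3 : ∀ {j}, j ∈ s' → u j ∉ Vlt j := by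
        intro j hj hmem
        exact (hmem' j hj).2 (by
          rw [← hu2 hj]
          exact hmapVlt j ⟨u j, hmem, rfl⟩)
      have hUco : ∀ x : V, x ∈ U → ∃ a : ℂ, x = a • v j₀ := by
        intro x hx
        rw [hUdef, Submodule.mem_span_singleton] at hx
        obtain ⟨a, ha⟩ := hx
        exact ⟨a, ha.symm⟩
      have hker : ∀ x : V, π x = 0 → x ∈ U := by
        intro x hx
        rwa [hπdef, Submodule.mkQ_apply, Submodule.Quotient.mk_eq_zero] at hx
      have hcoe : ∀ j : Fin n, ∃ a : ℂ, (j ∈ s' ∧ σ' j = none) → f (u j) = a • v j₀ := by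
        intro j
        by_cases hj : j ∈ s' ∧ σ' j = none
        · have hz : π (f (u j)) = 0 := by
            rw [← hπf, hu2 hj.1, hnone' j hj.1 hj.2]
          obtain ⟨a, ha⟩ := hUco _ (hker _ hz)
          exact ⟨a, fun _ => ha⟩
        · exact ⟨0, fun hc => absurd hc hj⟩
      choose aco haco using hcoe
      have hnotgt : ∀ {j i}, σ' j = some i → ¬ (∃ k, σ' k = some j) := by
        rintro j i hσ ⟨k, hk⟩
        rw [htgt' k j hk] at hσ
        exact (nomatch hσ)
      have hσ'j₀ : σ' j₀ = none := by
        cases hc : σ' j₀ with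
        | none => rfl
        | some i => exact absurd (hsome' j₀ i hc).1 (by simp [hs'def])
      have htgtrep : ∀ x (h : ∃ k, σ' k = some x),
          x ∈ s' ∧ ∃ a : ℂ, f (u h.choose) = u x + a • v j₀ := by
        intro x h
        obtain ⟨hks', hxs', hfw⟩ := hsome' h.choose x h.choose_spec
        refine ⟨hxs', ?_⟩
        have hz : π (f (u h.choose) - u x) = 0 := by
          rw [_root_.map_sub, ← hπf, hu2 hks', hu2 hxs', hfw, sub_self]
        obtain ⟨a, ha⟩ := hUco _ (hker _ hz)
        exact ⟨a, sub_eq_iff_eq_add'.mp ha⟩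
      set F := s'.filter (fun j => σ' j = none ∧ ¬ (∃ k, σ' k = some j) ∧ aco j ≠ 0)
        with hFdef
      set j₁ := if hF : F.Nonempty then F.min' hF else j₀ with hj₁def
      have hj₁F : F.Nonempty → j₁ ∈ F := by
        intro hF
        rw [hj₁def, dif_pos hF]
        exact F.min'_mem hF
      have hj₁le : ∀ {j}, j ∈ F → j₁ ≤ j := by
        intro j hj
        rw [hj₁def, dif_pos ⟨j, hj⟩]
        exact F.min'_le j hj
      have hFs' : ∀ {j}, j ∈ F → j ∈ s' := fun hj => (Finset.mem_filter.mp hj).1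
      have hFnone : ∀ {j}, j ∈ F → σ' j = none := fun hj => (Finset.mem_filter.mp hj).2.1
      have hFntgt : ∀ {j}, j ∈ F → ¬ (∃ k, σ' k = some j) :=
        fun hj => (Finset.mem_filter.mp hj).2.2.1
      have hFaco : ∀ {j}, j ∈ F → aco j ≠ 0 := fun hj => (Finset.mem_filter.mp hj).2.2.2
      set w : Fin n → V := fun x =>
        if x = j₀ then v j₀
        else if h : ∃ k, σ' k = some x then f (u h.choose)
        else if x ∈ F then
          (if x = j₁ then (aco x)⁻¹ • u x else u x - (aco x * (aco j₁)⁻¹) • u j₁)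
        else u x with hwdef
      set σ : Fin n → Option (Fin n) := fun x =>
        if F.Nonempty ∧ x = j₁ then some j₀ else σ' x with hσdef
      have hwj₀ : w j₀ = v j₀ := by simp only [hwdef, if_pos rfl]
      have hwtgt : ∀ x (h : ∃ k, σ' k = some x), w x = f (u h.choose) := by
        intro x h
        have hxs' := (hsome' h.choose x h.choose_spec).2.1
        simp only [hwdef]
        rw [if_neg (hs'ne hxs'), dif_pos h]
      have hwsrc : ∀ {x i}, σ' x = some i → w x = u x := by
        intro x i hσx
        have hxs' := (hsome' x i hσx).1
        simp only [hwdef]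
        rw [if_neg (hs'ne hxs'), dif_neg (hnotgt hσx), if_neg (fun hc => by
          rw [hFnone hc] at hσx; exact (nomatch hσx))]
      have hwfree : ∀ {x}, x ∈ s' → ¬(∃ k, σ' k = some x) → x ∉ F → w x = u x := by
        intro x hx h2 h3
        simp only [hwdef]
        rw [if_neg (hs'ne hx), dif_neg h2, if_neg h3]
      have hwF : ∀ {x}, x ∈ F → w x = (if x = j₁ then (aco x)⁻¹ • u x
          else u x - (aco x * (aco j₁)⁻¹) • u j₁) := by
        intro x hx
        simp only [hwdef]
        rw [if_neg (hs'ne (hFs' hx)), dif_neg (hFntgt hx), if_pos hx]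
      have hj₁s' : F.Nonempty → j₁ ∈ s' := fun hF => hFs' (hj₁F hF)
      have hacoF : ∀ {x}, x ∈ F → f (u x) = aco x • v j₀ :=
        fun hx => haco _ ⟨hFs' hx, hFnone hx⟩
      refine ⟨w, σ, ?_, ?_, ?_, ?_, ?_⟩
      · -- membership
        intro j hj
        by_cases hjj₀ : j = j₀
        · subst hjj₀
          rw [hwj₀]
          constructor
          · exact hv_mem_seg hj₀s le_rfl
          · rw [show span ℂ (v '' {k : Fin n | k ∈ s ∧ k < j₀}) = Vlt j₀ from rfl, hVltj₀]
            simpa using hv₀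
        · have hjs' : j ∈ s' := Finset.mem_erase.mpr ⟨hjj₀, hj⟩
          have hj₀j : j₀ < j := hj₀lt hj hjj₀
          by_cases htg : ∃ k, σ' k = some j
          · obtain ⟨_, a, hrep⟩ := htgtrep j htg
            rw [hwtgt j htg, hrep]
            constructor
            · exact add_mem (hu1 hjs') (smul_mem _ _ (hVlt_le_seg (hv_mem_lt hj₀s hj₀j)))
            · intro hc
              exact hu3 hjs' (by
                have : u j = (u j + a • v j₀) - a • v j₀ := by abel
                rw [this]
                exact sub_mem hc (smul_mem _ _ (hv_mem_lt hj₀s hj₀j)))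
          · by_cases hF : j ∈ F
            · rw [hwF hF]
              by_cases hj₁ : j = j₁
              · rw [if_pos hj₁]
                constructor
                · exact smul_mem _ _ (hu1 hjs')
                · intro hc
                  exact hu3 hjs' (by
                    have : u j = aco j • ((aco j)⁻¹ • u j) := by
                      rw [smul_smul, mul_inv_cancel₀ (hFaco hF), one_smul]
                    rw [this]
                    exact smul_mem _ _ hc)
              · rw [if_neg hj₁]
                have hj₁j : j₁ < j := lt_of_le_of_ne (hj₁le hF) (Ne.symm hj₁)
                have hj₁s : j₁ ∈ s := hs'sub (hj₁s' ⟨j, hF⟩)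
                have huj₁seg : u j₁ ∈ Vseg j := hVseg_mono (le_of_lt hj₁j) (hu1 (hj₁s' ⟨j, hF⟩))
                have huj₁lt : u j₁ ∈ Vlt j := hVseg_le_lt hj₁j (hu1 (hj₁s' ⟨j, hF⟩))
                constructor
                · exact sub_mem (hu1 hjs') (smul_mem _ _ huj₁seg)
                · intro hc
                  exact hu3 hjs' (by
                    have : u j = (u j - (aco j * (aco j₁)⁻¹) • u j₁)
                        + (aco j * (aco j₁)⁻¹) • u j₁ := by abel
                    rw [this]
                    exact add_mem hc (smul_mem _ _ huj₁lt))
            · rw [hwfree hjs' htg hF]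
              exact ⟨hu1 hjs', hu3 hjs'⟩
      · -- σ some
        intro j i hσj
        simp only [hσdef] at hσj
        by_cases hc : F.Nonempty ∧ j = j₁
        · rw [if_pos hc] at hσj
          obtain ⟨hF, rfl⟩ := hc
          have hi : i = j₀ := by injection hσj.symm
          subst hi
          have hjF := hj₁F hF
          refine ⟨hs'sub (hFs' hjF), hj₀s, ?_⟩
          rw [hwF hjF, if_pos rfl, _root_.map_smul, hacoF hjF, smul_smul,
            inv_mul_cancel₀ (hFaco hjF), one_smul, hwj₀]
        · rw [if_neg hc] at hσj
          obtain ⟨hjs', his', hfw⟩ := hsome' j i hσj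
          refine ⟨hs'sub hjs', hs'sub his', ?_⟩
          rw [hwsrc hσj]
          have hti : ∃ k, σ' k = some i := ⟨j, hσj⟩
          rw [hwtgt i hti]
          have : hti.choose = j := hinj' _ _ _ hti.choose_spec hσj
          rw [this]
      · -- σ none
        intro j hj hσj
        simp only [hσdef] at hσj
        by_cases hjj₀ : j = j₀
        · subst hjj₀
          rw [hwj₀]
          exact hfv₀
        · have hjs' : j ∈ s' := Finset.mem_erase.mpr ⟨hjj₀, hj⟩
          by_cases htg : ∃ k, σ' k = some j
          · rw [hwtgt j htg]
            exact hf _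
          · have hσ'j : σ' j = none := by
              by_cases hc : F.Nonempty ∧ j = j₁
              · rw [if_pos hc] at hσj
                exact (nomatch hσj)
              · rw [if_neg hc] at hσj
                exact hσj
            by_cases hF : j ∈ F
            · have hFne : F.Nonempty := ⟨j, hF⟩
              have hjj₁ : j ≠ j₁ := by
                intro hc
                rw [if_pos ⟨hFne, hc⟩] at hσj
                exact (nomatch hσj)
              rw [hwF hF, if_neg hjj₁, _root_.map_sub, _root_.map_smul, hacoF hF,
                hacoF (hj₁F hFne), smul_smul, mul_assoc,
                inv_mul_cancel₀ (hFaco (hj₁F hFne)), mul_one, sub_self]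
            · have haco0 : aco j = 0 := by
                by_contra hne
                exact hF (Finset.mem_filter.mpr ⟨hjs', hσ'j, htg, hne⟩)
              rw [hwfree hjs' htg hF, haco _ ⟨hjs', hσ'j⟩, haco0, zero_smul]
      · -- target not source
        intro j i hσj
        simp only [hσdef] at hσj ⊢
        by_cases hc : F.Nonempty ∧ j = j₁
        · rw [if_pos hc] at hσj
          have hi : i = j₀ := by injection hσj.symm
          subst hi
          rw [if_neg (fun hcc : F.Nonempty ∧ j₀ = j₁ => by
            exact hs'ne (hj₁s' hcc.1) hcc.2.symm), hσ'j₀]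
        · rw [if_neg hc] at hσj
          have hnone := htgt' j i hσj
          rw [if_neg (fun hcc : F.Nonempty ∧ i = j₁ => by
            have := hFntgt (hj₁F hcc.1)
            exact this ⟨j, by rw [← hcc.2]; exact hσj⟩), hnone]
      · -- injectivity
        intro j j' i hσj hσj'
        simp only [hσdef] at hσj hσj'
        by_cases hc : F.Nonempty ∧ j = j₁ <;> by_cases hc' : F.Nonempty ∧ j' = j₁
        · exact hc.2.trans hc'.2.symm
        · rw [if_pos hc] at hσj
          rw [if_neg hc'] at hσj'
          have hi : i = j₀ := by injection hσj.symm
          subst hi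
          exact absurd ((hsome' j' j₀ hσj').2.1) (by simp [hs'def])
        · rw [if_neg hc] at hσj
          rw [if_pos hc'] at hσj'
          have hi : i = j₀ := by injection hσj'.symm
          subst hi
          exact absurd ((hsome' j j₀ hσj).2.1) (by simp [hs'def])
        · rw [if_neg hc] at hσj
          rw [if_neg hc'] at hσj'
          exact hinj' j j' i hσj hσj'
    · -- CASE B : f (v j₀) ≠ 0
      set T0 := s.filter (fun k => f (v j₀) ∈ Vseg k) with hT0def
      have hsegmax : Vseg (s.max' hsne) = ⊤ := by
        have hset : {k : Fin n | k ∈ s ∧ k ≤ s.max' hsne} = ↑s := by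
          ext k
          simp only [Set.mem_setOf_eq, Finset.mem_coe, and_iff_left_iff_imp]
          exact fun hk => s.le_max' k hk
        show span ℂ (v '' {k : Fin n | k ∈ s ∧ k ≤ s.max' hsne}) = ⊤
        rw [hset, hspan]
      have hT0ne : T0.Nonempty := by
        refine ⟨s.max' hsne, Finset.mem_filter.mpr ⟨s.max'_mem hsne, ?_⟩⟩
        rw [hsegmax]
        trivial
      set i0 := T0.min' hT0ne with hi0def
      have hi0T0 : i0 ∈ T0 := T0.min'_mem hT0ne
      have hi0s : i0 ∈ s := (Finset.mem_filter.mp hi0T0).1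
      have hfseg : f (v j₀) ∈ Vseg i0 := (Finset.mem_filter.mp hi0T0).2
      have hflt : f (v j₀) ∉ Vlt i0 := by
        intro hcmem
        set L := s.filter (fun k => k < i0) with hLdef
        by_cases hL : L.Nonempty
        · set k' := L.max' hL with hk'def
          have hk'L : k' ∈ L := L.max'_mem hL
          have hk's : k' ∈ s := (Finset.mem_filter.mp hk'L).1
          have hk'lt : k' < i0 := (Finset.mem_filter.mp hk'L).2
          have hseteq : {k : Fin n | k ∈ s ∧ k < i0} = {k : Fin n | k ∈ s ∧ k ≤ k'} := by
            ext k
            simp only [Set.mem_setOf_eq, and_congr_right_iff]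
            intro hk
            constructor
            · intro hki0
              exact L.le_max' k (Finset.mem_filter.mpr ⟨hk, hki0⟩)
            · intro hkk'
              exact lt_of_le_of_lt hkk' hk'lt
          have : f (v j₀) ∈ Vseg k' := by
            show f (v j₀) ∈ span ℂ (v '' {k : Fin n | k ∈ s ∧ k ≤ k'})
            rw [← hseteq]
            exact hcmem
          have hk'T0 : k' ∈ T0 := Finset.mem_filter.mpr ⟨hk's, this⟩
          exact absurd (T0.min'_le k' hk'T0) (not_le.mpr hk'lt)
        · rw [Finset.not_nonempty_iff_eq_empty] at hL
          have hset : {k : Fin n | k ∈ s ∧ k < i0} = ∅ := by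
            ext k
            simp only [Set.mem_setOf_eq, Set.mem_empty_iff_false, iff_false, not_and, not_lt]
            intro hk
            by_contra hlt
            have : k ∈ L := Finset.mem_filter.mpr ⟨hk, not_le.mp hlt⟩
            rw [hL] at this
            exact absurd this (Finset.notMem_empty k)
          rw [hVltdef] at hcmem
          simp only at hcmem
          rw [hset] at hcmem
          simp at hcmem
          exact hfv₀ hcmem
      have hj₀i0 : j₀ ≠ i0 := by
        intro heq
        have hset : {k : Fin n | k ∈ s ∧ k ≤ j₀} = {j₀} := by
          ext k
          simp only [Set.mem_setOf_eq, Set.mem_singleton_iff]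
          constructor
          · rintro ⟨hk1, hk2⟩
            exact le_antisymm hk2 (s.min'_le k hk1)
          · rintro rfl
            exact ⟨hj₀s, le_rfl⟩
        have : f (v j₀) ∈ span ℂ (v '' {j₀}) := by
          have := hfseg
          rw [← heq] at this
          rw [hVsegdef] at this
          simp only at this
          rwa [hset] at this
        rw [Set.image_singleton, Submodule.mem_span_singleton] at this
        obtain ⟨cc, hcc⟩ := this
        have h2 : (cc * cc) • v j₀ = 0 := by
          rw [← smul_smul]
          calc cc • cc • v j₀ = cc • f (v j₀) := by rw [hcc]
            _ = f (cc • v j₀) := (_root_.map_smul f cc _).symm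
            _ = f (f (v j₀)) := by rw [hcc]
            _ = 0 := hf _
        rcases smul_eq_zero.mp h2 with h | h
        · have hcc0 : cc = 0 := by
            rcases mul_eq_zero.mp h with h' | h' <;> exact h'
          rw [hcc0, zero_smul] at hcc
          exact hfv₀ hcc.symm
        · exact hv₀ h
      have hj₀lti0 : j₀ < i0 := hj₀lt hi0s (Ne.symm hj₀i0)
      -- decompose f (v j₀)
      have hsetsplit : {k : Fin n | k ∈ s ∧ k ≤ i0}
          = {k : Fin n | k ∈ s ∧ k < i0} ∪ {i0} := by
        ext k
        simp only [Set.mem_setOf_eq, Set.mem_union, Set.mem_singleton_iff]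
        constructor
        · rintro ⟨hk1, hk2⟩
          rcases lt_or_eq_of_le hk2 with h | h
          · exact Or.inl ⟨hk1, h⟩
          · exact Or.inr h
        · rintro (⟨hk1, hk2⟩ | rfl)
          · exact ⟨hk1, le_of_lt hk2⟩
          · exact ⟨hi0s, le_rfl⟩
      have hsegsplit : Vseg i0 = Vlt i0 ⊔ span ℂ {v i0} := by
        show span ℂ (v '' {k : Fin n | k ∈ s ∧ k ≤ i0})
          = span ℂ (v '' {k : Fin n | k ∈ s ∧ k < i0}) ⊔ span ℂ {v i0}
        rw [hsetsplit, Set.image_union, Set.image_singleton, Submodule.span_union]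
      obtain ⟨y, hy, z, hz, hyz⟩ := Submodule.mem_sup.mp (by rw [← hsegsplit]; exact hfseg)
      obtain ⟨c, hc⟩ := Submodule.mem_span_singleton.mp hz
      have hfv₀eq : f (v j₀) = y + c • v i0 := by rw [← hyz, ← hc]
      have hcne : c ≠ 0 := by
        intro hc0
        apply hflt
        rw [hfv₀eq, hc0, zero_smul, add_zero]
        exact hy
      have hvi0eq : v i0 = c⁻¹ • (f (v j₀) - y) := by
        rw [hfv₀eq]
        rw [add_sub_cancel_left]
        rw [smul_smul, inv_mul_cancel₀ hcne, one_smul]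
      set U : Submodule ℂ V := span ℂ {v j₀, f (v j₀)} with hUdef
      have hvj₀U : v j₀ ∈ U := subset_span (by simp)
      have hfv₀U : f (v j₀) ∈ U := subset_span (by simp)
      have hUle : U ≤ Submodule.comap f U := by
        rw [hUdef, span_le]
        rintro x hx
        simp only [Set.mem_insert_iff, Set.mem_singleton_iff] at hx
        rcases hx with rfl | rfl
        · exact hfv₀U
        · show f (f (v j₀)) ∈ U
          rw [hf]
          exact zero_mem U
      set π := U.mkQ with hπdef
      set f' : (V ⧸ U) →ₗ[ℂ] (V ⧸ U) := Submodule.mapQ U U f hUle with hf'def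
      have hπf : ∀ x, f' (π x) = π (f x) := by
        intro x
        rw [hπdef, hf'def]
        simp [Submodule.mapQ_apply]
      have hf' : ∀ yq, f' (f' yq) = 0 := by
        intro yq
        obtain ⟨x, rfl⟩ := Submodule.mkQ_surjective U yq
        show f' (f' (π x)) = 0
        rw [hπf, hπf, hf x, _root_.map_zero]
      have hker : ∀ x : V, π x = 0 → x ∈ U := by
        intro x hx
        rwa [hπdef, Submodule.mkQ_apply, Submodule.Quotient.mk_eq_zero] at hx
      have hπv₀ : π (v j₀) = 0 := by
        rw [hπdef, Submodule.mkQ_apply, Submodule.Quotient.mk_eq_zero]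
        exact hvj₀U
      have hπfv₀ : π (f (v j₀)) = 0 := by
        rw [hπdef, Submodule.mkQ_apply, Submodule.Quotient.mk_eq_zero]
        exact hfv₀U
      set s' := (s.erase j₀).erase i0 with hs'def
      have hs'sub : ∀ {x}, x ∈ s' → x ∈ s :=
        fun hx => Finset.mem_of_mem_erase (Finset.mem_of_mem_erase hx)
      have hs'nej₀ : ∀ {x}, x ∈ s' → x ≠ j₀ :=
        fun hx => Finset.ne_of_mem_erase (Finset.mem_of_mem_erase hx)
      have hs'nei0 : ∀ {x}, x ∈ s' → x ≠ i0 := fun hx => Finset.ne_of_mem_erase hx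
      have hj₀ns' : j₀ ∉ s' := fun hc => (hs'nej₀ hc) rfl
      have hi0ns' : i0 ∉ s' := fun hc => (hs'nei0 hc) rfl
      have hs'card : s'.card ≤ m := by
        rw [hs'def, Finset.card_erase_of_mem
          (Finset.mem_erase.mpr ⟨hj₀i0.symm, hi0s⟩), Finset.card_erase_of_mem hj₀s]
        omega
      have hind' : LinearIndependent ℂ (fun j : {x // x ∈ s'} => v j) := by
        have hinj : Function.Injective
            (fun j : {x // x ∈ s'} => (⟨j, hs'sub j.2⟩ : {x // x ∈ s})) := by
          intro a b hab
          exact Subtype.ext (by simpa using hab)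
        exact hind.comp _ hinj
      have hs'diff : (↑s' : Set (Fin n)) ⊆ (↑s : Set (Fin n)) \ {i0} := by
        intro x hx
        exact ⟨hs'sub hx, hs'nei0 hx⟩
      have hnotmem_i0 : v i0 ∉ span ℂ (v '' ((↑s : Set (Fin n)) \ {i0})) := by
        have h1 := hind.notMem_span_image (R := ℂ)
          (s := {j : {x // x ∈ s} | ↑j ∈ ((↑s : Set (Fin n)) \ {i0})}) (x := ⟨i0, hi0s⟩)
          (by simp)
        rwa [image_coe_aux v s ((↑s : Set (Fin n)) \ {i0}) (fun x hx => hx.1)] at h1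
      have hVlt_i0_le : Vlt i0 ≤ span ℂ (v '' ((↑s : Set (Fin n)) \ {i0})) := by
        rw [hVltdef]
        apply span_mono
        apply Set.image_mono
        rintro k ⟨hk1, hk2⟩
        exact ⟨hk1, fun hc => absurd (hc ▸ hk2) (lt_irrefl i0)⟩
      have hfv₀notmem : f (v j₀) ∉ span ℂ (v '' ((↑s : Set (Fin n)) \ {i0})) := by
        intro hmem
        apply hnotmem_i0
        rw [hvi0eq]
        exact smul_mem _ _ (sub_mem hmem (hVlt_i0_le hy))
      have hnotmem_j₀ : v j₀ ∉ span ℂ (v '' (↑s' : Set (Fin n))) := by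
        have h1 := hind.notMem_span_image (R := ℂ)
          (s := {j : {x // x ∈ s} | ↑j ∈ (↑s' : Set (Fin n))}) (x := ⟨j₀, hj₀s⟩)
          (by simpa using hj₀ns')
        rwa [image_coe_aux v s (↑s' : Set (Fin n)) (fun x hx => hs'sub hx)] at h1
      have hs'union : span ℂ (v '' (↑s' : Set (Fin n))) ⊔ span ℂ {v j₀}
          ≤ span ℂ (v '' ((↑s : Set (Fin n)) \ {i0})) := by
        apply sup_le
        · exact span_mono (Set.image_mono hs'diff)
        · rw [span_le]
          rintro x hx
          rw [Set.mem_singleton_iff] at hx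
          subst hx
          exact subset_span ⟨j₀, ⟨hj₀s, fun hc => hj₀i0 hc⟩, rfl⟩
      have hdisjB : Disjoint (span ℂ (v '' (↑s' : Set (Fin n)))) U := by
        rw [Submodule.disjoint_def]
        intro x hx hxU
        rw [hUdef] at hxU
        obtain ⟨a, b, hab⟩ := Submodule.mem_span_pair.mp hxU
        have hb : b = 0 := by
          by_contra hbne
          apply hfv₀notmem
          have : f (v j₀) = b⁻¹ • (x - a • v j₀) := by
            rw [← hab]
            rw [add_sub_cancel_left]
            rw [smul_smul, inv_mul_cancel₀ hbne, one_smul]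
          rw [this]
          refine smul_mem _ _ (sub_mem ?_ ?_)
          · exact hs'union (Submodule.mem_sup_left hx)
          · exact hs'union (Submodule.mem_sup_right (smul_mem _ _ (subset_span rfl)))
        rw [hb, zero_smul, add_zero] at hab
        have ha : a = 0 := by
          by_contra hane
          apply hnotmem_j₀
          have : v j₀ = a⁻¹ • x := by
            rw [← hab, smul_smul, inv_mul_cancel₀ hane, one_smul]
          rw [this]
          exact smul_mem _ _ hx
        rw [ha, zero_smul] at hab
        exact hab.symm
      have hsupB : span ℂ (v '' (↑s' : Set (Fin n))) ⊔ U = ⊤ := by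
        rw [eq_top_iff, ← hspan, span_le]
        rintro x ⟨k, hk, rfl⟩
        rw [Finset.mem_coe] at hk
        by_cases hki0 : k = i0
        · subst hki0
          rw [hvi0eq]
          refine smul_mem _ _ (sub_mem ?_ ?_)
          · exact Submodule.mem_sup_right hfv₀U
          · -- y ∈ Vlt i0 ≤ sup
            have : Vlt i0 ≤ span ℂ (v '' (↑s' : Set (Fin n))) ⊔ U := by
              rw [hVltdef]
              rw [span_le]
              rintro xx ⟨kk, ⟨hkk1, hkk2⟩, rfl⟩
              by_cases hkkj₀ : kk = j₀
              · subst hkkj₀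
                exact Submodule.mem_sup_right hvj₀U
              · refine Submodule.mem_sup_left (subset_span ⟨kk, ?_, rfl⟩)
                refine Finset.mem_coe.mpr (Finset.mem_erase.mpr ⟨?_, Finset.mem_erase.mpr ⟨hkkj₀, hkk1⟩⟩)
                intro hcc
                rw [hcc] at hkk2
                exact lt_irrefl i0 hkk2
            exact this hy
        · by_cases hkj₀ : k = j₀
          · subst hkj₀
            exact Submodule.mem_sup_right hvj₀U
          · refine Submodule.mem_sup_left (subset_span ⟨k, ?_, rfl⟩)
            exact Finset.mem_coe.mpr (Finset.mem_erase.mpr ⟨hki0, Finset.mem_erase.mpr ⟨hkj₀, hk⟩⟩)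
      obtain ⟨hindQ, hspQ⟩ := quot_basis v s' U hind' hdisjB hsupB
      obtain ⟨w', σ', hmem', hsome', hnone', htgt', hinj'⟩ :=
        IH (V ⧸ U) f' hf' s' hs'card (fun k => π (v k)) hindQ hspQ
      -- mapping Vlt to the quotient
      have hmapVlt0 : (Vlt i0).map π ≤
          span ℂ ((fun k => π (v k)) '' {k : Fin n | k ∈ s' ∧ k < i0}) := by
        rw [hVltdef, Submodule.map_span, span_le]
        rintro x ⟨yy, ⟨k, ⟨hk1, hk2⟩, rfl⟩, rfl⟩
        by_cases hkj : k = j₀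
        · subst hkj
          show π (v j₀) ∈ _
          rw [hπv₀]
          exact zero_mem _
        · refine subset_span ⟨k, ⟨?_, hk2⟩, rfl⟩
          refine Finset.mem_erase.mpr ⟨?_, Finset.mem_erase.mpr ⟨hkj, hk1⟩⟩
          intro hc
          rw [hc] at hk2
          exact lt_irrefl i0 hk2
      have hπvi0 : π (v i0) ∈
          span ℂ ((fun k => π (v k)) '' {k : Fin n | k ∈ s' ∧ k < i0}) := by
        have hπy : π y ∈ span ℂ ((fun k => π (v k)) '' {k : Fin n | k ∈ s' ∧ k < i0}) := by
          apply hmapVlt0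
          exact ⟨y, hy, rfl⟩
        have heq : π (v i0) = c⁻¹ • ((0 : V ⧸ U) - π y) := by
          rw [hvi0eq, _root_.map_smul, _root_.map_sub, hπfv₀]
        rw [heq, zero_sub]
        exact smul_mem _ _ (neg_mem hπy)
      have hmapVlt : ∀ j : Fin n, (Vlt j).map π ≤
          span ℂ ((fun k => π (v k)) '' {k : Fin n | k ∈ s' ∧ k < j}) := by
        intro j
        rw [hVltdef, Submodule.map_span, span_le]
        rintro x ⟨yy, ⟨k, ⟨hk1, hk2⟩, rfl⟩, rfl⟩
        by_cases hkj : k = j₀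
        · subst hkj
          show π (v j₀) ∈ _
          rw [hπv₀]
          exact zero_mem _
        · by_cases hki : k = i0
          · subst hki
            refine span_mono (Set.image_mono ?_) hπvi0
            rintro t ⟨ht1, ht2⟩
            exact ⟨ht1, lt_trans ht2 hk2⟩
          · exact subset_span ⟨k, ⟨Finset.mem_erase.mpr ⟨hki,
              Finset.mem_erase.mpr ⟨hkj, hk1⟩⟩, hk2⟩, rfl⟩
      have hlift : ∀ j : Fin n, ∃ x : V, j ∈ s' → (x ∈ Vseg j ∧ π x = w' j) := by
        intro j
        by_cases hj : j ∈ s'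
        · have h1 := (hmem' j hj).1
          have h2 : span ℂ ((fun k => π (v k)) '' {k : Fin n | k ∈ s' ∧ k ≤ j})
              ≤ (Vseg j).map π := by
            rw [span_le]
            rintro x ⟨k, ⟨hk1, hk2⟩, rfl⟩
            exact ⟨v k, hv_mem_seg (hs'sub hk1) hk2, rfl⟩
          obtain ⟨x, hx1, hx2⟩ := h2 h1
          exact ⟨x, fun _ => ⟨hx1, hx2⟩⟩
        · exact ⟨0, fun hc => absurd hc hj⟩
      choose u hu using hlift
      have hu1 : ∀ {j}, j ∈ s' → u j ∈ Vseg j := fun hj => ((hu _) hj).1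
      have hu2 : ∀ {j}, j ∈ s' → π (u j) = w' j := fun hj => ((hu _) hj).2
      have hu3 : ∀ {j}, j ∈ s' → u j ∉ Vlt j := by
        intro j hj hmem
        exact (hmem' j hj).2 (by
          rw [← hu2 hj]
          exact hmapVlt j ⟨u j, hmem, rfl⟩)
      have hUco : ∀ x : V, x ∈ U → ∃ a b : ℂ, x = a • v j₀ + b • f (v j₀) := by
        intro x hx
        rw [hUdef] at hx
        obtain ⟨a, b, hab⟩ := Submodule.mem_span_pair.mp hx
        exact ⟨a, b, hab.symm⟩
      have hnotgt : ∀ {j i}, σ' j = some i → ¬ (∃ k, σ' k = some j) := by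
        rintro j i hσ ⟨k, hk⟩
        rw [htgt' k j hk] at hσ
        exact (nomatch hσ)
      have hσ'j₀ : σ' j₀ = none := by
        cases hcs : σ' j₀ with
        | none => rfl
        | some i => exact absurd (hsome' j₀ i hcs).1 hj₀ns'
      have hσ'i0 : σ' i0 = none := by
        cases hcs : σ' i0 with
        | none => rfl
        | some i => exact absurd (hsome' i0 i hcs).1 hi0ns'
      have hσ'noti0 : ∀ {j}, σ' j ≠ some i0 := by
        intro j hc
        exact hi0ns' (hsome' j i0 hc).2.1
      -- coefficients
      have hcoB : ∀ j : Fin n, ∃ a b : ℂ, j ∈ s' →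
          ((∀ i, σ' j = some i → f (u j) = u i + a • v j₀ + b • f (v j₀)) ∧
           (σ' j = none → f (u j) = a • v j₀ + b • f (v j₀))) := by
        intro j
        by_cases hj : j ∈ s'
        · cases hσj : σ' j with
          | some i =>
            have hi := hsome' j i hσj
            have hz : π (f (u j) - u i) = 0 := by
              rw [_root_.map_sub, ← hπf, hu2 hj, hu2 hi.2.1, hi.2.2, sub_self]
            obtain ⟨a, b, hab⟩ := hUco _ (hker _ hz)
            refine ⟨a, b, fun _ => ⟨fun i' hi' => ?_,
              fun hcn => (nomatch hcn)⟩⟩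
            have hii : i' = i := by
              injection hi' with h3
              exact h3.symm
            subst hii
            rw [sub_eq_iff_eq_add'.mp hab]
            exact (add_assoc _ _ _).symm
          | none =>
            have hz : π (f (u j)) = 0 := by
              rw [← hπf, hu2 hj, hnone' j hj hσj]
            obtain ⟨a, b, hab⟩ := hUco _ (hker _ hz)
            exact ⟨a, b, fun _ => ⟨fun i' hi' => (nomatch hi'),
              fun _ => hab⟩⟩
        · exact ⟨0, 0, fun hc => absurd hc hj⟩
      choose aB bB hB using hcoB
      set w : Fin n → V := fun x =>
        if x = j₀ then v j₀
        else if x = i0 then f (v j₀)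
        else if h : ∃ k, σ' k = some x then f (u h.choose - bB h.choose • v j₀)
        else u x - bB x • v j₀ with hwdef
      set σ : Fin n → Option (Fin n) := fun x => if x = j₀ then some i0 else σ' x with hσdef
      have hwj₀ : w j₀ = v j₀ := by simp only [hwdef, if_pos rfl]
      have hwi0 : w i0 = f (v j₀) := by
        simp only [hwdef]
        rw [if_neg (fun hc : i0 = j₀ => hj₀i0 hc.symm)]
        simp
      have hwtgt : ∀ x (h : ∃ k, σ' k = some x),
          w x = f (u h.choose - bB h.choose • v j₀) := by
        intro x h
        have hxs' := (hsome' h.choose x h.choose_spec).2.1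
        simp only [hwdef]
        rw [if_neg (hs'nej₀ hxs'), if_neg (hs'nei0 hxs'), dif_pos h]
      have hwoth : ∀ {x}, x ≠ j₀ → x ≠ i0 → ¬(∃ k, σ' k = some x) →
          w x = u x - bB x • v j₀ := by
        intro x h1 h2 h3
        simp only [hwdef]
        rw [if_neg h1, if_neg h2, dif_neg h3]
      have htgtrep : ∀ x (h : ∃ k, σ' k = some x),
          x ∈ s' ∧ w x = u x + aB h.choose • v j₀ := by
        intro x h
        have hspec := h.choose_spec
        have hks' := (hsome' h.choose x hspec).1
        have hxs' := (hsome' h.choose x hspec).2.1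
        refine ⟨hxs', ?_⟩
        rw [hwtgt x h, _root_.map_sub, _root_.map_smul]
        rw [(hB h.choose hks').1 x hspec]
        abel
      refine ⟨w, σ, ?_, ?_, ?_, ?_, ?_⟩
      · intro j hj
        by_cases hjj₀ : j = j₀
        · subst hjj₀
          rw [hwj₀]
          refine ⟨hv_mem_seg hj₀s le_rfl, ?_⟩
          rw [show span ℂ (v '' {k : Fin n | k ∈ s ∧ k < j₀}) = Vlt j₀ from rfl, hVltj₀]
          simpa using hv₀
        · by_cases hji0 : j = i0
          · subst hji0
            rw [hwi0]
            exact ⟨hfseg, hflt⟩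
          · have hjs' : j ∈ s' := Finset.mem_erase.mpr ⟨hji0, Finset.mem_erase.mpr ⟨hjj₀, hj⟩⟩
            have hj₀j : j₀ < j := hj₀lt hj hjj₀
            have hv₀lt : v j₀ ∈ Vlt j := hv_mem_lt hj₀s hj₀j
            by_cases htg : ∃ k, σ' k = some j
            · obtain ⟨_, hrep⟩ := htgtrep j htg
              rw [hrep]
              constructor
              · exact add_mem (hu1 hjs') (smul_mem _ _ (hVlt_le_seg hv₀lt))
              · intro hc
                exact hu3 hjs' (by
                  have heq2 : u j = (u j + aB htg.choose • v j₀) - aB htg.choose • v j₀ := by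
                    abel
                  rw [heq2]
                  exact sub_mem hc (smul_mem _ _ hv₀lt))
            · rw [hwoth hjj₀ hji0 htg]
              constructor
              · exact sub_mem (hu1 hjs') (smul_mem _ _ (hVlt_le_seg hv₀lt))
              · intro hc
                exact hu3 hjs' (by
                  have heq2 : u j = (u j - bB j • v j₀) + bB j • v j₀ := by abel
                  rw [heq2]
                  exact add_mem hc (smul_mem _ _ hv₀lt))
      · intro j i hσj
        simp only [hσdef] at hσj
        by_cases hjj₀ : j = j₀
        · subst hjj₀
          rw [if_pos rfl] at hσj
          have hi : i = i0 := by injection hσj with h; exact h.symm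
          subst hi
          exact ⟨hj₀s, hi0s, by rw [hwj₀, hwi0]⟩
        · rw [if_neg hjj₀] at hσj
          obtain ⟨hjs', his', _⟩ := hsome' j i hσj
          refine ⟨hs'sub hjs', hs'sub his', ?_⟩
          have hnt : ¬(∃ k, σ' k = some j) := hnotgt hσj
          rw [hwoth hjj₀ (hs'nei0 hjs') hnt]
          have hti : ∃ k, σ' k = some i := ⟨j, hσj⟩
          rw [hwtgt i hti]
          have hchoose : hti.choose = j := hinj' _ _ _ hti.choose_spec hσj
          rw [hchoose]
      · intro j hj hσj
        simp only [hσdef] at hσj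
        by_cases hjj₀ : j = j₀
        · rw [if_pos hjj₀] at hσj
          exact (nomatch hσj)
        · rw [if_neg hjj₀] at hσj
          by_cases hji0 : j = i0
          · subst hji0
            rw [hwi0]
            exact hf _
          · have hjs' : j ∈ s' := Finset.mem_erase.mpr ⟨hji0, Finset.mem_erase.mpr ⟨hjj₀, hj⟩⟩
            by_cases htg : ∃ k, σ' k = some j
            · rw [hwtgt j htg]
              exact hf _
            · rw [hwoth hjj₀ hji0 htg]
              have hfval : f (u j - bB j • v j₀) = aB j • v j₀ := by
                rw [_root_.map_sub, _root_.map_smul, (hB j hjs').2 hσj]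
                abel
              have haB0 : aB j = 0 := by
                have h2 : f (f (u j - bB j • v j₀)) = 0 := hf _
                rw [hfval, _root_.map_smul] at h2
                rcases smul_eq_zero.mp h2 with h | h
                · exact h
                · exact absurd h hfv₀
              rw [hfval, haB0, zero_smul]
      · intro j i hσj
        simp only [hσdef] at hσj ⊢
        by_cases hjj₀ : j = j₀
        · rw [if_pos hjj₀] at hσj
          have hi : i = i0 := by injection hσj with h; exact h.symm
          subst hi
          rw [if_neg (fun hc : i0 = j₀ => hj₀i0 hc.symm), hσ'i0]
        · rw [if_neg hjj₀] at hσj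
          have his' := (hsome' j i hσj).2.1
          rw [if_neg (hs'nej₀ his'), htgt' j i hσj]
      · intro j j' i hσj hσj'
        simp only [hσdef] at hσj hσj'
        by_cases hjj₀ : j = j₀ <;> by_cases hj'j₀ : j' = j₀
        · rw [hjj₀, hj'j₀]
        · rw [if_pos hjj₀] at hσj
          rw [if_neg hj'j₀] at hσj'
          have hi : i = i0 := by injection hσj with h; exact h.symm
          subst hi
          exact absurd hσj' hσ'noti0
        · rw [if_neg hjj₀] at hσj
          rw [if_pos hj'j₀] at hσj'
          have hi : i = i0 := by injection hσj' with h; exact h.symm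
          subst hi
          exact absurd hσj hσ'noti0
        · rw [if_neg hjj₀] at hσj
          rw [if_neg hj'j₀] at hσj'
          exact hinj' j j' i hσj hσj'




end KeyLemma

section Assembly
open Matrix Submodule Module

variable {n : ℕ}

/-- Every 2-nilpotent matrix is Borel-conjugate to the matrix of an OLP. -/
lemma normal_form (N : TwoNilpotent n) :
    ∃ A : Finset (Fin n × Fin n), OLPcond A ∧ ∃ (h2 : matOf A ^ 2 = 0),
      BorelConj n N ⟨matOf A, h2⟩ := by
  classical
  have hNsq : N.1 * N.1 = 0 := by
    have := N.2
    rwa [pow_two] at this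
  set f : (Fin n → ℂ) →ₗ[ℂ] (Fin n → ℂ) := N.1.mulVecLin with hfdef
  have hf : ∀ x, f (f x) = 0 := by
    intro x
    have h1 : f (f x) = (N.1 * N.1).mulVecLin x := by
      rw [Matrix.mulVecLin_mul]
      rfl
    rw [h1, hNsq, Matrix.mulVecLin_zero]
    rfl
  set e : Fin n → (Fin n → ℂ) := fun j => Pi.single j 1 with hedef
  have he : ∀ j, (Pi.basisFun ℂ (Fin n)) j = e j := fun j => Pi.basisFun_apply ℂ (Fin n) j
  have h0 : LinearIndependent ℂ e := by
    have h1 := (Pi.basisFun ℂ (Fin n)).linearIndependent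
    have h2 : e = ⇑(Pi.basisFun ℂ (Fin n)) := by
      funext j
      rw [he j]
    rwa [h2]
  have hind : LinearIndependent ℂ (fun j : {x // x ∈ (Finset.univ : Finset (Fin n))} => e j) :=
    h0.comp _ Subtype.coe_injective
  have hspan : span ℂ (e '' ↑(Finset.univ : Finset (Fin n))) = ⊤ := by
    rw [Finset.coe_univ, Set.image_univ]
    have h3 : e = ⇑(Pi.basisFun ℂ (Fin n)) := by
      funext j
      rw [he j]
    rw [h3, Basis.span_eq]
  obtain ⟨w, σ, hmem, hsome, hnone, htgt, hinj⟩ :=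
    key_lemma n (Fin n → ℂ) f hf Finset.univ (by simp) e hind hspan
  set B : Matrix (Fin n) (Fin n) ℂ := Matrix.of (fun i j => w j i) with hBdef
  have hsupp : ∀ (P : Fin n → Prop) [DecidablePred P],
      span ℂ (e '' {k : Fin n | k ∈ (Finset.univ : Finset (Fin n)) ∧ P k})
        ≤ suppSub n (Finset.univ.filter P) := by
    intro P _
    rw [span_le]
    rintro x ⟨k, ⟨_, hk⟩, rfl⟩
    intro i hi
    simp only [Finset.mem_filter, Finset.mem_univ, true_and] at hi
    have hik : i ≠ k := fun hc => hi (hc ▸ hk)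
    simp [hedef, Pi.single_apply, hik]
  have hBtri : ∀ i j : Fin n, j < i → B i j = 0 := by
    intro i j hij
    have h1 := (hmem j (Finset.mem_univ j)).1
    have h2 := hsupp (fun k => k ≤ j) h1
    exact h2 i (by
      simp only [Finset.mem_filter, Finset.mem_univ, true_and]
      exact not_le.mpr hij)
  have hBdiag : ∀ j, B j j ≠ 0 := by
    intro j hc
    have h1 := (hmem j (Finset.mem_univ j)).1
    have h2 := (hmem j (Finset.mem_univ j)).2
    apply h2
    have hsetsplit : {k : Fin n | k ∈ (Finset.univ : Finset (Fin n)) ∧ k ≤ j}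
        = {k : Fin n | k ∈ (Finset.univ : Finset (Fin n)) ∧ k < j} ∪ {j} := by
      ext k
      simp only [Set.mem_setOf_eq, Finset.mem_univ, true_and, Set.mem_union,
        Set.mem_singleton_iff]
      constructor
      · intro hk
        rcases lt_or_eq_of_le hk with h | h
        · exact Or.inl h
        · exact Or.inr h
      · rintro (h | rfl)
        · exact le_of_lt h
        · exact le_rfl
    rw [hsetsplit, Set.image_union, Set.image_singleton, Submodule.span_union] at h1
    obtain ⟨y, hy, z, hz, hyz⟩ := Submodule.mem_sup.mp h1
    obtain ⟨c, hcz⟩ := Submodule.mem_span_singleton.mp hz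
    have hyj : y j = 0 := by
      have h3 := hsupp (fun k => k < j) hy
      exact h3 j (by simp)
    have hzj : z j = c := by
      rw [← hcz]
      simp [hedef]
    have hcc : c = 0 := by
      have h4 : w j j = y j + z j := by rw [← hyz]; rfl
      rw [hyj, hzj, zero_add] at h4
      rw [← h4]
      exact hc
    rw [← hyz, ← hcz, hcc, zero_smul, add_zero]
    exact hy
  have hBblock : B.BlockTriangular id := by
    intro i j hij
    exact hBtri i j hij
  have hBdet : IsUnit B.det := by
    rw [Matrix.det_of_upperTriangular hBblock, isUnit_iff_ne_zero, Finset.prod_ne_zero_iff]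
    exact fun a _ => hBdiag a
  have hBunit : IsUnit B := (Matrix.isUnit_iff_isUnit_det B).mpr hBdet
  set Aσ : Finset (Fin n × Fin n) :=
    Finset.univ.filter (fun p : Fin n × Fin n => σ p.2 = some p.1) with hAdef
  have hmemA : ∀ p : Fin n × Fin n, p ∈ Aσ ↔ σ p.2 = some p.1 := by
    intro p; simp [hAdef]
  have hOLP : OLPcond Aσ := by
    constructor
    · intro a ha hc
      rw [hmemA] at ha
      have h2 := htgt a.2 a.1 ha
      rw [hc] at h2
      rw [h2] at ha
      exact (nomatch ha)
    · intro x
      rw [Finset.card_le_one]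
      intro a ha b hb
      rw [Finset.mem_filter] at ha hb
      have ha1 : σ a.2 = some a.1 := (hmemA a).mp ha.1
      have hb1 : σ b.2 = some b.1 := (hmemA b).mp hb.1
      rcases ha.2 with hax | hax <;> rcases hb.2 with hbx | hbx
      · have hab1 : a.1 = b.1 := by rw [hax, hbx]
        have hab2 : a.2 = b.2 := hinj a.2 b.2 a.1 ha1 (by rw [hab1]; exact hb1)
        exact Prod.ext hab1 hab2
      · exfalso
        have h2 := htgt a.2 a.1 ha1
        rw [hax, ← hbx] at h2
        rw [h2] at hb1
        exact (nomatch hb1)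
      · exfalso
        have h2 := htgt b.2 b.1 hb1
        rw [hbx, ← hax] at h2
        rw [h2] at ha1
        exact (nomatch ha1)
      · have hab2 : a.2 = b.2 := by rw [hax, hbx]
        have hab1 : a.1 = b.1 := by
          have h3 := ha1
          rw [hab2, hb1] at h3
          injection h3 with h3
          exact h3.symm
        exact Prod.ext hab1 hab2
  have hNB : N.1 * B = B * matOf Aσ := by
    ext i j
    rw [Matrix.mul_apply, Matrix.mul_apply]
    have hL : ∑ k, N.1 i k * B k j = f (w j) i := rfl
    rw [hL]
    cases hσj : σ j with
    | some k₀ =>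
      have hmm : (k₀, j) ∈ Aσ := (hmemA _).mpr hσj
      have hR : ∑ k, B i k * matOf Aσ k j = B i k₀ := by
        rw [Finset.sum_eq_single k₀]
        · show B i k₀ * matOf Aσ k₀ j = B i k₀
          simp [matOf, hmm]
        · intro k _ hk
          have hnm : (k, j) ∉ Aσ := by
            rw [hmemA, hσj]
            intro hcc
            injection hcc with hcc
            exact hk hcc.symm
          simp [matOf, hnm]
        · intro hk
          exact absurd (Finset.mem_univ k₀) hk
      rw [hR, (hsome j k₀ hσj).2.2]
      rfl
    | none =>
      have hL0 : f (w j) i = 0 := by rw [hnone j (Finset.mem_univ j) hσj]; rfl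
      rw [hL0]
      symm
      refine Finset.sum_eq_zero fun k _ => ?_
      have hnm : (k, j) ∉ Aσ := by
        rw [hmemA, hσj]
        intro hcc
        exact (nomatch hcc)
      simp [matOf, hnm]
  have hA2 : matOf Aσ ^ 2 = 0 := by
    rw [pow_two]
    exact matOf_sq hOLP
  have hBinvtri : ∀ i j : Fin n, j < i → B⁻¹ i j = 0 := by
    have hInv : Invertible B := B.invertibleOfIsUnitDet hBdet
    have h3 := Matrix.blockTriangular_inv_of_blockTriangular (M := B) (b := id) hBblock
    exact fun i j h => h3 h
  refine ⟨Aσ, hOLP, hA2, B⁻¹, Matrix.isUnit_nonsing_inv_iff.mpr hBunit, hBinvtri, ?_⟩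
  show B⁻¹ * N.1 * B⁻¹⁻¹ = matOf Aσ
  rw [Matrix.nonsing_inv_nonsing_inv B hBdet, Matrix.mul_assoc, hNB, ← Matrix.mul_assoc,
    Matrix.nonsing_inv_mul B hBdet, Matrix.one_mul]

end Assembly

/-- The `B`-orbits of 2-nilpotent `n × n` complex matrices are in bijection with
oriented link patterns of size `n`; in particular there are finitely many orbits. -/
theorem borel_orbits_two_nilpotent_equiv_olp (n : ℕ) :
    Nonempty (Quot (BorelConj n) ≃ OrientedLinkPattern n) ∧
      Finite (Quot (BorelConj n)) := by
  classical
  have hfin : Finite (OrientedLinkPattern n) := by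
    unfold OrientedLinkPattern
    infer_instance
  have hmk : ∀ A : OrientedLinkPattern n, matOf A.1 ^ 2 = 0 := by
    intro A
    rw [pow_two]
    exact matOf_sq A.2
  set theMap : OrientedLinkPattern n → Quot (BorelConj n) :=
    fun A => Quot.mk _ ⟨matOf A.1, hmk A⟩ with hmapdef
  have hsurj : Function.Surjective theMap := by
    intro q
    induction q using Quot.inductionOn with
    | _ N =>
      obtain ⟨A, hA, h2, hconj⟩ := normal_form N
      exact ⟨⟨A, hA⟩, by rw [hmapdef]; exact (Quot.sound hconj).symm⟩
  have hinjmap : Function.Injective theMap := by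
    intro A A' hAA
    rw [hmapdef] at hAA
    have hEq := Quot.eqvGen_exact hAA
    have hrho : ∀ (X Y : TwoNilpotent n), Relation.EqvGen (BorelConj n) X Y →
        ∀ i j, rho X.1 i j = rho Y.1 i j := by
      intro X Y h
      induction h with
      | rel x y hxy =>
        obtain ⟨b, hb, ht, heq⟩ := hxy
        intro i j
        rw [← heq]
        exact (rho_conj hb ht i j).symm
      | refl x => intro i j; rfl
      | symm x y _ ih => intro i j; exact (ih i j).symm
      | trans x y z _ _ ih1 ih2 => intro i j; exact (ih1 i j).trans (ih2 i j)
    have hcA : ∀ i j, cA A.1 i j = cA A'.1 i j := by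
      intro i j
      have h1 := hrho _ _ hEq i j
      rw [show ((⟨matOf A.1, hmk A⟩ : TwoNilpotent n)).1 = matOf A.1 from rfl,
        show ((⟨matOf A'.1, hmk A'⟩ : TwoNilpotent n)).1 = matOf A'.1 from rfl] at h1
      rw [rho_matOf A.2, rho_matOf A'.2] at h1
      omega
    exact Subtype.ext (cA_eq_imp_eq hcA)
  exact ⟨⟨(Equiv.ofBijective theMap ⟨hinjmap, hsurj⟩).symm⟩,
    Finite.of_equiv _ (Equiv.ofBijective theMap ⟨hinjmap, hsurj⟩)⟩
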